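/- Let p₁, p₂, … be an infinite sequence of (not necessarily distinct) prime numbers, and for N ∈ ℕ let P_N = ∏_{i=1}^N pᵢ. Let L ∈ ℕ and n ≥ 1. Then there exist N ∈ ℕ and positive integers M₁, …, M_n, M₁′, …, M_n′, all greater than L, with Mⱼ′ ≤ 2Mᵢ′ for all 1 ≤ i, j ≤ n, such that P_N = ∏_{i=1}^n Mᵢ + Σ_{i=1}^n Mᵢ′ ∏_{j≠i} Mⱼ. -/

import Mathlib

/-- Factorization lemma: given an infinite sequence of (possibly repeated)
primes, some partial product `P_N = p₁ ⋯ p_N` can be written in the form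
`∏ Mᵢ + ∑ Mᵢ' ∏_{j ≠ i} Mⱼ` with all `Mᵢ, Mᵢ' > L` and `Mⱼ' ≤ 2 Mᵢ'` for all
`i, j`. -/
theorem statement5 (p : ℕ → ℕ) (hp : ∀ i, (p i).Prime) (L : ℕ) (n : ℕ)
    (hn : 1 ≤ n) :
    ∃ (N : ℕ) (M M' : Fin n → ℕ),
      (∀ i, L < M i) ∧ (∀ i, L < M' i) ∧
      (∀ i j, M' j ≤ 2 * M' i) ∧
      ∏ i ∈ Finset.range N, p i
        = ∏ i, M i + ∑ i, M' i * ∏ j ∈ Finset.univ.erase i, M j := by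
  have hp2 : ∀ j, 2 ≤ p j := fun j => (hp j).two_le
  set b := L + 1 with hb
  set f : ℕ → ℕ := fun k => ∏ j ∈ Finset.range b, p (k * b + j) with hf
  have hblock : ∀ m : ℕ, ∏ j ∈ Finset.range (m * b), p j
      = ∏ i ∈ Finset.range m, f i := by
    intro m
    induction m with
    | zero => simp
    | succ k ih =>
      rw [Nat.succ_mul, Finset.prod_range_add, ih]
      exact (Finset.prod_range_succ f k).symm
  have hpow : ∀ k c, 2 ^ c ≤ ∏ j ∈ Finset.range c, p (k * b + j) := by
    intro k c
    calc 2 ^ c = ∏ _j ∈ Finset.range c, 2 := by simp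
    _ ≤ _ := Finset.prod_le_prod (by intros; norm_num) (fun j _ => hp2 _)
  set M : Fin n → ℕ := fun i => f i.val with hMdef
  have hLM : ∀ i, L < M i := by
    intro i
    have h1 : L < 2 ^ b :=
      lt_of_lt_of_le (Nat.lt_two_pow_self (n := L)) (Nat.pow_le_pow_right (by norm_num) (by omega))
    exact lt_of_lt_of_le h1 (hpow i.val b)
  have hM1 : ∀ i, 1 ≤ M i := fun i => lt_of_le_of_lt (Nat.zero_le L) (hLM i)
  set i0 : Fin n := ⟨0, hn⟩ with hi0
  set P : ℕ := ∏ i, M i with hPdef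
  set Q : Fin n → ℕ := fun i => ∏ j ∈ Finset.univ.erase i, M j with hQdef
  have hMQ : ∀ i, M i * Q i = P :=
    fun i => Finset.mul_prod_erase _ _ (Finset.mem_univ i)
  have hQ1 : ∀ i, 1 ≤ Q i := fun i => Finset.one_le_prod' (fun j _ => hM1 j)
  have hP1 : 1 ≤ P := Finset.one_le_prod' (fun j _ => hM1 j)
  set S : ℕ := ∑ i, Q i with hSdef
  have hS1 : 1 ≤ S :=
    le_trans (hQ1 i0) (Finset.single_le_sum (fun i _ => Nat.zero_le _) (Finset.mem_univ i0))
  set ML : ℕ := M i0 with hML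
  set B : ℕ := (S * ML + 1) * S + 1 with hB
  set R : ℕ := ∏ j ∈ Finset.range B, p (n * b + j) with hR
  have hBR : B ≤ R := le_trans (le_of_lt (Nat.lt_two_pow_self (n := B))) (hpow n B)
  set t : ℕ := (R - 1) / S with ht
  set r : ℕ := (R - 1) % S with hrdef
  have hrS : r < S := Nat.mod_lt _ hS1
  have htge : S * ML + 1 ≤ t := by
    rw [ht, Nat.le_div_iff_mul_le hS1]
    omega
  have hRsplit : S * t + r = R - 1 := Nat.div_add_mod (R - 1) S
  have hLP : L < P :=
    lt_of_lt_of_le (hLM i0)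
      (le_trans (Nat.le_mul_of_pos_right _ (hQ1 i0)) (le_of_eq (hMQ i0)))
  have htP : P ≤ t * P := Nat.le_mul_of_pos_left P (by omega)
  refine ⟨n * b + B, M, fun i => if i = i0 then t * P + r * ML else t * P, hLM, ?_, ?_, ?_⟩
  · intro i
    by_cases h : i = i0 <;> simp only [h, if_true, if_false] <;> omega
  · intro i j
    have hrML : r * ML ≤ t * P := by
      have h1 : r * ML ≤ S * ML := Nat.mul_le_mul_right _ (le_of_lt hrS)
      have h2 : t ≤ t * P := Nat.le_mul_of_pos_right _ hP1
      omega
    have hlow : t * P ≤ (if i = i0 then t * P + r * ML else t * P) := by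
      split <;> omega
    have hhigh : (if j = i0 then t * P + r * ML else t * P) ≤ t * P + r * ML := by
      split <;> omega
    calc (if j = i0 then t * P + r * ML else t * P) ≤ t * P + r * ML := hhigh
    _ ≤ 2 * (t * P) := by omega
    _ ≤ 2 * (if i = i0 then t * P + r * ML else t * P) := Nat.mul_le_mul_left _ hlow
  · have hPN : ∏ i ∈ Finset.range (n * b), p i = P := by
      rw [hblock n, hPdef, hMdef]
      exact (Fin.prod_univ_eq_prod_range f n).symm
    rw [Finset.prod_range_add, hPN]
    have hsum : ∑ i, (if i = i0 then t * P + r * ML else t * P) * Q i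
        = t * P * S + r * P := by
      have hterm : ∀ i ∈ Finset.univ,
          (if i = i0 then t * P + r * ML else t * P) * Q i
            = t * P * Q i + (if i = i0 then r * P else 0) := by
        intro i _
        by_cases h : i = i0
        · subst h
          simp only [if_true]
          rw [add_mul, mul_assoc r, hML, hMQ]
        · simp [h]
      rw [Finset.sum_congr rfl hterm, Finset.sum_add_distrib,
        Finset.sum_ite_eq' Finset.univ i0 (fun _ => r * P)]
      rw [← Finset.mul_sum]
      simp
      exact Or.inl rfl
    rw [hsum]
    have hR1 : R = 1 + (S * t + r) := by omega
    calc P * R = P * (1 + (S * t + r)) := by rw [← hR1]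
    _ = P + (t * P * S + r * P) := by ring
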